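/- Let Γ ≅ (ℤ/2ℤ) × (ℤ/2ℤ) with generators σ, τ, and let M = ℤ/8ℤ with σ acting by m ↦ −m and τ acting by m ↦ 3m. Then H¹(Γ, M) ≅ ℤ/2ℤ. -/

import Mathlib

open CategoryTheory CategoryTheory.Limits groupCohomology

/-- A permutation `ℤΓ`-module: one isomorphic to `ℤ[X]` for some `Γ`-set `X`. -/
def IsPermutationModule {Γ : Type} [Group Γ] (F : Rep ℤ Γ) : Prop :=
  ∃ (X : Type) (_ : MulAction Γ X), Nonempty (F ≅ Rep.ofMulAction ℤ Γ X)

/-- A permutation projective module: a direct summand of a permutation module. -/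
def IsPermutationProjective {Γ : Type} [Group Γ] (M : Rep ℤ Γ) : Prop :=
  ∃ F : Rep ℤ Γ, IsPermutationModule F ∧ ∃ (i : M ⟶ F) (r : F ⟶ M), i ≫ r = 𝟙 M

/-- A coflasque module: `ℤ`-free with vanishing `H¹(Γ', M)` for all subgroups `Γ' ≤ Γ`. -/
def IsCoflasque {Γ : Type} [Group Γ] (M : Rep.{0} ℤ Γ) : Prop :=
  (@Module.Free ℤ M.V _ _ M.hV2) ∧
    ∀ Γ' : Subgroup Γ,
      Subsingleton (H1 (Rep.res Γ'.subtype M))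

/-- A permutation presentation of `M`: an exact sequence `0 → F → F → M → 0`
with `F` a permutation module. -/
def HasPermutationPresentation {Γ : Type} [Group Γ] (M : Rep ℤ Γ) : Prop :=
  ∃ (F : Rep ℤ Γ) (_ : IsPermutationModule F) (f : F ⟶ F) (π : F ⟶ M),
    Function.Injective f.hom ∧ Function.Surjective π.hom ∧ Function.Exact f.hom π.hom

/-- `π` is `H⁰`-surjective if it is surjective on `Γ'`-invariants for every subgroup `Γ'`. -/
def IsH0Surjective {Γ : Type} [Group Γ] {M N : Rep.{0} ℤ Γ} (π : M ⟶ N) : Prop :=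
  ∀ Γ' : Subgroup Γ, ∀ n : N, (∀ γ : Γ', N.ρ ↑γ n = n) →
    ∃ m : M, (∀ γ : Γ', M.ρ ↑γ m = m) ∧ π.hom m = n

abbrev KG4 : Type := Multiplicative (ZMod 2) × Multiplicative (ZMod 2)

def sg4 : KG4 := (Multiplicative.ofAdd 1, 1)
def tg4 : KG4 := (1, Multiplicative.ofAdd 1)

lemma rho_apply4 (ρ : Representation ℤ KG4 (ZMod 8))
    (hσ : ∀ m : ZMod 8, ρ sg4 m = -m) (hτ : ∀ m : ZMod 8, ρ tg4 m = 3 * m)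
    (g : KG4) (m : ZMod 8) :
    ρ g m = (if g.1 = 1 then 1 else -1) * (if g.2 = 1 then 1 else 3) * m := by
  have hx : ∀ x : Multiplicative (ZMod 2), x = 1 ∨ x = Multiplicative.ofAdd 1 := by decide
  obtain ⟨a, b⟩ := g
  rcases hx a with rfl | rfl <;> rcases hx b with rfl | rfl
  · rw [show ((1 : Multiplicative (ZMod 2)), (1 : Multiplicative (ZMod 2))) = (1 : KG4) from rfl,
      map_one]
    simp
  · rw [show ((1 : Multiplicative (ZMod 2)), Multiplicative.ofAdd (1 : ZMod 2)) = tg4 from rfl, hτ]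
    rw [if_pos (show tg4.1 = 1 from rfl), if_neg (show ¬ tg4.2 = 1 from by decide)]
    ring
  · rw [show (Multiplicative.ofAdd (1 : ZMod 2), (1 : Multiplicative (ZMod 2))) = sg4 from rfl, hσ]
    rw [if_neg (show ¬ sg4.1 = 1 from by decide), if_pos (show sg4.2 = 1 from rfl)]
    ring
  · rw [show (Multiplicative.ofAdd (1 : ZMod 2), Multiplicative.ofAdd (1 : ZMod 2)) = sg4 * tg4
      from by decide, map_mul, Module.End.mul_apply, hτ, hσ,
      if_neg (show ¬ (sg4*tg4).1 = 1 from by decide), if_neg (show ¬ (sg4*tg4).2 = 1 from by decide)]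
    ring

theorem h1_klein_four_on_zmod8
    (ρ : Representation ℤ (Multiplicative (ZMod 2) × Multiplicative (ZMod 2)) (ZMod 8))
    (hσ : ∀ m : ZMod 8, ρ (Multiplicative.ofAdd 1, 1) m = -m)
    (hτ : ∀ m : ZMod 8, ρ (1, Multiplicative.ofAdd 1) m = 3 * m) :
    Nonempty (H1 (Rep.of ρ) ≃+ ZMod 2) := by
  classical
  have hσ' : ∀ m : ZMod 8, ρ sg4 m = -m := hσ
  have hτ' : ∀ m : ZMod 8, ρ tg4 m = 3 * m := hτ
  have hρ := rho_apply4 ρ hσ' hτ'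
  let F : cocycles₁ (Rep.of ρ) → KG4 → ZMod 8 := fun f g => f g
  have hval : ∀ (f : cocycles₁ (Rep.of ρ)) (g h : KG4),
      F f (g * h) = ρ g (F f h) + F f g :=
    fun f g h => (mem_cocycles₁_iff (f : KG4 → ZMod 8)).1 f.2 g h
  have hone : ∀ f : cocycles₁ (Rep.of ρ), F f (1 : KG4) = 0 :=
    fun f => cocycles₁_map_one f
  have h4 : ∀ f : cocycles₁ (Rep.of ρ), 4 * F f tg4 = 0 := by
    intro f
    have h := hval f tg4 tg4
    rw [show tg4 * tg4 = 1 from by decide, hone, hτ'] at h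
    linear_combination -h
  have h2 : ∀ f : cocycles₁ (Rep.of ρ), 2 * (F f sg4 + F f tg4) = 0 := by
    intro f
    have ha := hval f sg4 tg4
    have hb := hval f tg4 sg4
    rw [show tg4 * sg4 = sg4 * tg4 from by decide] at hb
    rw [hσ'] at ha
    rw [hτ'] at hb
    linear_combination ha - hb
  have key : ∀ f : cocycles₁ (Rep.of ρ), F f sg4 + F f tg4 = 0 ∨ F f sg4 + F f tg4 = 4 :=
    fun f => (by decide : ∀ x : ZMod 8, 2 * x = 0 → x = 0 ∨ x = 4) _ (h2 f)
  have hadd : ∀ (f g : cocycles₁ (Rep.of ρ)) (x : KG4),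
      F (f + g) x = F f x + F g x := fun _ _ _ => rfl
  let φ₀ : cocycles₁ (Rep.of ρ) → ZMod 2 :=
    fun f => if F f sg4 + F f tg4 = 0 then 0 else 1
  have hφ0 : ∀ f, φ₀ f = if F f sg4 + F f tg4 = 0 then 0 else 1 := fun _ => rfl
  have hφadd : ∀ f g, φ₀ (f + g) = φ₀ f + φ₀ g := by
    intro f g
    have hfg : F (f + g) sg4 + F (f + g) tg4 =
        (F f sg4 + F f tg4) + (F g sg4 + F g tg4) := by
      rw [hadd, hadd]; ring
    rw [hφ0, hφ0, hφ0, hfg]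
    rcases key f with hf | hf <;> rcases key g with hg | hg <;> rw [hf, hg] <;> decide
  let φ : cocycles₁ (Rep.of ρ) →+ ZMod 2 := AddMonoidHom.mk' φ₀ hφadd
  let ψ : LinearMap.ker (shortComplexH1 (Rep.of ρ)).g.hom →+ ZMod 2 := φ
  have hφ : ∀ f, ψ f = φ₀ f := fun _ => rfl
  have hker : ∀ f : cocycles₁ (Rep.of ρ),
      (F f sg4 + F f tg4 = 0) ↔ (f : KG4 → ZMod 8) ∈ coboundaries₁ (Rep.of ρ) := by
    intro f
    constructor
    · intro h0
      rw [coboundaries₁, LinearMap.mem_range]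
      obtain ⟨x, hx⟩ : ∃ x : ZMod 8, 2 * x = F f tg4 :=
        (by decide : ∀ t : ZMod 8, 4 * t = 0 → ∃ x : ZMod 8, 2 * x = t) _ (h4 f)
      refine ⟨x, ?_⟩
      have hcases : ∀ g : KG4, g = 1 ∨ g = sg4 ∨ g = tg4 ∨ g = sg4 * tg4 := by decide
      funext g
      show ρ g x - x = F f g
      rcases hcases g with rfl | rfl | rfl | rfl
      · rw [map_one, hone]; simp
      · rw [hσ']; linear_combination -hx - h0
      · rw [hτ']; linear_combination hx
      · rw [map_mul, Module.End.mul_apply, hτ', hσ']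
        have he := hval f sg4 tg4
        rw [hσ'] at he
        linear_combination -he - 2 * hx - h0
    · intro hf
      obtain ⟨x, hx⟩ := LinearMap.mem_range.1 hf
      refine (fun (y : ZMod 8) (hy : ∀ g : KG4, ρ g y - y = F f g) => ?_) x (fun g => congrFun hx g)
      have e1 := hy sg4
      have e2 := hy tg4
      rw [hσ'] at e1
      rw [hτ'] at e2
      linear_combination -e1 - e2
  have hkerφ : ψ.ker =
      (LinearMap.range (shortComplexH1 (Rep.of ρ)).moduleCatToCycles).toAddSubgroup := by
    ext f
    have hr : f ∈ LinearMap.range (shortComplexH1 (Rep.of ρ)).moduleCatToCycles ↔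
        F f sg4 + F f tg4 = 0 := by
      rw [hker f]
      unfold coboundaries₁
      exact ⟨fun h => let ⟨x, hx⟩ := LinearMap.mem_range.1 h
        LinearMap.mem_range.2 ⟨x, congrArg Subtype.val hx⟩,
        fun h => let ⟨x, hx⟩ := LinearMap.mem_range.1 h
        LinearMap.mem_range.2 ⟨x, Subtype.ext hx⟩⟩
    rw [Submodule.mem_toAddSubgroup, hr, AddMonoidHom.mem_ker, hφ]
    show (if F f sg4 + F f tg4 = 0 then (0 : ZMod 2) else 1) = 0 ↔ _
    constructor
    · intro h
      by_contra hc
      rw [if_neg hc] at h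
      exact one_ne_zero h
    · intro h
      rw [if_pos h]
  have hmem : (show KG4 → ZMod 8 from fun g => if g.1 = 1 then 0 else 4)
      ∈ cocycles₁ (Rep.of ρ) := by
    rw [mem_cocycles₁_iff]
    intro g h
    show (if (g * h).1 = 1 then (0 : ZMod 8) else 4) =
      ρ g (if h.1 = 1 then (0 : ZMod 8) else 4) + (if g.1 = 1 then (0 : ZMod 8) else 4)
    rw [hρ]
    revert g h
    decide
  have hsurj : Function.Surjective ψ := by
    intro z
    rcases (by decide : ∀ z : ZMod 2, z = 0 ∨ z = 1) z with rfl | rfl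
    · exact ⟨0, map_zero _⟩
    · refine ⟨(⟨_, hmem⟩ : cocycles₁ (Rep.of ρ)), ?_⟩
      show (if F ⟨_, hmem⟩ sg4 + F ⟨_, hmem⟩ tg4 = 0 then (0 : ZMod 2) else 1) = 1
      rw [if_neg]
      show ¬((if sg4.1 = 1 then (0 : ZMod 8) else 4) + (if tg4.1 = 1 then (0 : ZMod 8) else 4) = 0)
      decide
  exact ⟨(H1Iso (Rep.of ρ)).toLinearEquiv.toAddEquiv.trans ((QuotientAddGroup.quotientAddEquivOfEq hkerφ.symm).trans
    (QuotientAddGroup.quotientKerEquivOfSurjective ψ hsurj))⟩
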